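/- For any two d×d matrices B, C over k, one has κ_1(B, C, I_d) = 2d + rank(BC − CB), where I_d is the identity matrix. More precisely, under the standard identifications, the composition ψ_1(B, C) ∘ ψ_0(B, C) : k^d → k^d ⊗ Λ²(k²) ≅ k^d equals the commutator CB − BC. -/

import Mathlib

open Matrix

section Auxiliary

open Sum

/-- Rank is invariant under reindexing by equivalences (rectangular version). -/
theorem rank_submatrix_equiv' {R : Type*} [CommRing R] {m n m' n' : Type*} [Fintype m] [Fintype n]
    [Fintype m'] [Fintype n'] (A : Matrix m n R) (e₁ : m' ≃ m) (e₂ : n' ≃ n) :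
    (A.submatrix e₁ e₂).rank = A.rank := by
  rw [Matrix.rank, Matrix.rank, Matrix.mulVecLin_submatrix, LinearMap.range_comp,
    LinearMap.range_comp,
    show LinearMap.funLeft R R ⇑e₂.symm = ↑(LinearEquiv.funCongrLeft R R e₂.symm) from rfl,
    LinearEquiv.range, Submodule.map_top,
    show LinearMap.funLeft R R ⇑e₁ = ↑(LinearEquiv.funCongrLeft R R e₁) from rfl,
    LinearEquiv.finrank_map_eq]

theorem range_prodMap' {R M M₂ M₃ M₄ : Type*} [CommRing R] [AddCommGroup M] [AddCommGroup M₂]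
    [AddCommGroup M₃] [AddCommGroup M₄] [Module R M] [Module R M₂] [Module R M₃] [Module R M₄]
    (f : M →ₗ[R] M₂) (g : M₃ →ₗ[R] M₄) :
    LinearMap.range (f.prodMap g) = (LinearMap.range f).prod (LinearMap.range g) := by
  ext ⟨x, y⟩
  simp only [LinearMap.mem_range, Submodule.mem_prod, LinearMap.prodMap_apply, Prod.ext_iff,
    Prod.exists]
  exact ⟨fun ⟨a, b, h1, h2⟩ => ⟨⟨a, h1⟩, ⟨b, h2⟩⟩, fun ⟨⟨a, ha⟩, ⟨b, hb⟩⟩ => ⟨a, b, ha, hb⟩⟩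

/-- The product of two submodules is linearly equivalent to the product of the submodules. -/
def Submodule.prodEquiv' {R M M₂ : Type*} [CommRing R] [AddCommGroup M] [AddCommGroup M₂]
    [Module R M] [Module R M₂] (p : Submodule R M) (q : Submodule R M₂) :
    (p.prod q) ≃ₗ[R] p × q where
  toFun x := (⟨x.1.1, x.2.1⟩, ⟨x.1.2, x.2.2⟩)
  invFun y := ⟨(y.1.1, y.2.1), ⟨y.1.2, y.2.2⟩⟩
  map_add' _ _ := rfl
  map_smul' _ _ := rfl
  left_inv _ := rfl
  right_inv _ := rfl

theorem finrank_prod'' {k M M₂ : Type*} [Field k] [AddCommGroup M] [AddCommGroup M₂]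
    [Module k M] [Module k M₂] [FiniteDimensional k M] [FiniteDimensional k M₂]
    (p : Submodule k M) (q : Submodule k M₂) :
    Module.finrank k (p.prod q) = Module.finrank k p + Module.finrank k q := by
  rw [(Submodule.prodEquiv' p q).finrank_eq, Module.finrank_prod]

/-- The rank of a block-diagonal matrix is the sum of the ranks of the diagonal blocks. -/
theorem rank_fromBlocks_diag {k m n m' n' : Type*} [Field k] [Fintype m] [Fintype n]
    [Fintype m'] [Fintype n'] (A : Matrix m m' k) (D : Matrix n n' k) :
    (fromBlocks A 0 0 D).rank = A.rank + D.rank := by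
  have hF : (fromBlocks A 0 0 D).mulVecLin =
      (LinearEquiv.sumArrowLequivProdArrow m n k k).symm.toLinearMap ∘ₗ
        (A.mulVecLin.prodMap D.mulVecLin) ∘ₗ
        (LinearEquiv.sumArrowLequivProdArrow m' n' k k).toLinearMap := by
    apply LinearMap.ext; intro v
    funext i
    rcases i with i | i <;>
      simp [Matrix.mulVecLin, Matrix.fromBlocks_mulVec,
        LinearEquiv.sumArrowLequivProdArrow, Equiv.sumArrowEquivProdArrow]
  rw [Matrix.rank, Matrix.rank, Matrix.rank, hF, LinearMap.range_comp, LinearMap.range_comp,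
    LinearEquiv.range, Submodule.map_top, range_prodMap', LinearEquiv.finrank_map_eq,
    finrank_prod'']

theorem rank_neg' {k : Type*} [Field k] {d : ℕ} (X : Matrix (Fin d) (Fin d) k) :
    (-X).rank = X.rank := by
  rw [show -X = (-1 : Matrix (Fin d) (Fin d) k) * X by rw [neg_one_mul],
    rank_mul_eq_right_of_isUnit_det]
  rw [show (-1 : Matrix (Fin d) (Fin d) k) = -(1 : Matrix (Fin d) (Fin d) k) from rfl,
    Matrix.det_neg, Matrix.det_one, mul_one]
  exact IsUnit.pow _ (isUnit_one.neg)

/-- Reindexing the rows of `ψ_1(B, C, I)` by the three standard 2-element subsets of `Fin 3`. -/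
def eRow (d : ℕ) : ((Fin d ⊕ Fin d) ⊕ Fin d) ≃ Fin d × {T : Finset (Fin 3) // T.card = 2} where
  toFun x := Sum.elim (Sum.elim (fun p => (p, ⟨{0, 2}, by decide⟩))
    (fun p => (p, ⟨{1, 2}, by decide⟩))) (fun p => (p, ⟨{0, 1}, by decide⟩)) x
  invFun y := if y.2.1 = {0, 2} then inl (inl y.1) else
    if y.2.1 = {1, 2} then inl (inr y.1) else inr y.1
  left_inv := by rintro ((p | p) | p) <;> simp (config := { decide := true })
  right_inv := by
    rintro ⟨p, T, hT⟩
    rcases (by decide : ∀ T : Finset (Fin 3), T.card = 2 → T = {0,2} ∨ T = {1,2} ∨ T = {0,1}) T hT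
      with h | h | h <;> subst h <;> simp (config := { decide := true })

/-- Reindexing the columns of `ψ_1(B, C, I)` by the three singleton subsets of `Fin 3`. -/
def eCol (d : ℕ) : ((Fin d ⊕ Fin d) ⊕ Fin d) ≃ Fin d × {T : Finset (Fin 3) // T.card = 1} where
  toFun x := Sum.elim (Sum.elim (fun p => (p, ⟨{0}, by decide⟩))
    (fun p => (p, ⟨{1}, by decide⟩))) (fun p => (p, ⟨{2}, by decide⟩)) x
  invFun y := if y.2.1 = {0} then inl (inl y.1) else
    if y.2.1 = {1} then inl (inr y.1) else inr y.1
  left_inv := by rintro ((p | p) | p) <;> simp (config := { decide := true })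
  right_inv := by
    rintro ⟨p, T, hT⟩
    rcases (by decide : ∀ T : Finset (Fin 3), T.card = 1 → T = {0} ∨ T = {1} ∨ T = {2}) T hT
      with h | h | h <;> subst h <;> simp (config := { decide := true })

/-- The two singleton subsets of `Fin 2`. -/
def eMid : Fin 2 ≃ {S : Finset (Fin 2) // S.card = 1} where
  toFun i := if i = 0 then ⟨{0}, by decide⟩ else ⟨{1}, by decide⟩
  invFun S := if S.1 = {0} then 0 else 1
  left_inv := by decide
  right_inv := by
    rintro ⟨T, hT⟩
    rcases (by decide : ∀ T : Finset (Fin 2), T.card = 1 → T = {0} ∨ T = {1}) T hT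
      with h | h <;> subst h <;> simp (config := { decide := true })

end Auxiliary

/-- The matrix of the map `ψ_j(A) : k^d ⊗ Λ^j(k^e) → k^d ⊗ Λ^{j+1}(k^e)` determined by
`ψ_j(A)(u ⊗ E) = Σ_i (A_i u) ⊗ (E ∧ e_i)`, written in the standard bases: basis vectors of
`k^d ⊗ Λ^j(k^e)` are indexed by pairs `(p, S)` with `p : Fin d` and `S` a `j`-element subset
of `Fin e`, and `e_S ∧ e_i = (-1)^{#{s ∈ S | i < s}} e_{insert i S}` if `i ∉ S`, else `0`. -/
noncomputable def psiMatrix {R : Type*} [CommRing R] (d e : ℕ)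
    (A : Fin e → Matrix (Fin d) (Fin d) R) (j : ℕ) :
    Matrix (Fin d × {T : Finset (Fin e) // T.card = j + 1})
      (Fin d × {S : Finset (Fin e) // S.card = j}) R :=
  Matrix.of fun qT pS =>
    ∑ i : Fin e,
      if i ∉ pS.2.1 ∧ qT.2.1 = insert i pS.2.1 then
        (-1 : R) ^ (pS.2.1.filter (fun s => i < s)).card * A i qT.1 pS.1
      else 0

/-- `κ_j(A)` is the rank of `ψ_j(A)`. -/
noncomputable def kappa {R : Type*} [CommRing R] (d e : ℕ)
    (A : Fin e → Matrix (Fin d) (Fin d) R) (j : ℕ) : ℕ :=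
  (psiMatrix d e A j).rank

section Main

open Sum

theorem kappa_part1 {k : Type*} [Field k] (d : ℕ) (B C : Matrix (Fin d) (Fin d) k) :
    (psiMatrix d 3 ![B, C, 1] 1).rank = 2 * d + (B * C - C * B).rank := by
  set Q : Matrix (Fin d ⊕ Fin d) (Fin d) k := fromRows (-B) (-C) with hQ
  set R : Matrix (Fin d) (Fin d ⊕ Fin d) k := fromCols C (-B) with hR
  have hM : (psiMatrix d 3 ![B, C, 1] 1).submatrix (eRow d) (eCol d) =
      fromBlocks 1 Q R 0 := by
    ext x y
    rcases x with (p | p) | p <;> rcases y with (q | q) | q <;>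
      simp (config := { decide := true }) [psiMatrix, eRow, eCol, Fin.sum_univ_three,
        fromBlocks, fromRows, fromCols, Matrix.one_apply, submatrix, hQ, hR] <;> rfl
  have key : (fromBlocks 1 0 (-R) 1 : Matrix ((Fin d ⊕ Fin d) ⊕ Fin d) _ k) *
      (fromBlocks 1 Q R 0) * (fromBlocks 1 (-Q) 0 1) =
      fromBlocks 1 0 0 (-(R * Q)) := by
    rw [Matrix.fromBlocks_multiply, Matrix.fromBlocks_multiply]
    simp [Matrix.neg_mul, Matrix.mul_neg]
  have hRQ : R * Q = B * C - C * B := by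
    rw [hR, hQ, fromCols_mul_fromRows]
    simp [Matrix.mul_neg, Matrix.neg_mul, sub_eq_add_neg, add_comm]
  have hdetL : IsUnit ((fromBlocks 1 0 (-R) 1 : Matrix ((Fin d ⊕ Fin d) ⊕ Fin d) _ k)).det := by
    rw [Matrix.det_fromBlocks_zero₁₂, Matrix.det_one, Matrix.det_one, mul_one]
    exact isUnit_one
  have hdetU : IsUnit ((fromBlocks 1 (-Q) 0 1 : Matrix ((Fin d ⊕ Fin d) ⊕ Fin d) _ k)).det := by
    rw [Matrix.det_fromBlocks_zero₂₁, Matrix.det_one, Matrix.det_one, mul_one]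
    exact isUnit_one
  calc (psiMatrix d 3 ![B, C, 1] 1).rank
      = (fromBlocks 1 Q R 0 : Matrix ((Fin d ⊕ Fin d) ⊕ Fin d) _ k).rank := by
        rw [← hM, rank_submatrix_equiv']
    _ = ((fromBlocks 1 0 (-R) 1 : Matrix ((Fin d ⊕ Fin d) ⊕ Fin d) _ k) *
          (fromBlocks 1 Q R 0) * (fromBlocks 1 (-Q) 0 1)).rank := by
        rw [Matrix.rank_mul_eq_left_of_isUnit_det _ _ hdetU,
          Matrix.rank_mul_eq_right_of_isUnit_det _ _ hdetL]
    _ = 2 * d + (B * C - C * B).rank := by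
        rw [key, rank_fromBlocks_diag, Matrix.rank_one, hRQ, rank_neg' (B * C - C * B)]
        simp [Fintype.card_sum, two_mul]

theorem kappa_part2 {k : Type*} [Field k] (d : ℕ) (B C : Matrix (Fin d) (Fin d) k) :
    psiMatrix d 2 ![B, C] 1 * psiMatrix d 2 ![B, C] 0 =
      Matrix.of (fun qT pS => (C * B - B * C) qT.1 pS.1) := by
  ext ⟨r, T, hT⟩ ⟨s, S, hS⟩
  obtain rfl : T = {0, 1} :=
    (by decide : ∀ T : Finset (Fin 2), T.card = 2 → T = {0, 1}) T hT
  obtain rfl : S = ∅ := Finset.card_eq_zero.mp hS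
  rw [Matrix.mul_apply]
  rw [Fintype.sum_prod_type]
  have h2 : ∀ p : Fin d, ∑ x : {S : Finset (Fin 2) // S.card = 1},
      psiMatrix d 2 ![B, C] 1 (r, ⟨{0, 1}, hT⟩) (p, x) *
        psiMatrix d 2 ![B, C] 0 (p, x) (s, ⟨∅, hS⟩) =
      C r p * B p s - B r p * C p s := by
    intro p
    rw [← Equiv.sum_comp eMid]
    rw [Fin.sum_univ_two]
    simp (config := { decide := true }) [psiMatrix, eMid, Fin.sum_univ_two]
    ring
  rw [Finset.sum_congr rfl (fun p _ => h2 p)]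
  simp [Matrix.sub_apply, Matrix.mul_apply, Finset.sum_sub_distrib]

end Main

/-- for the tuple `(B, C, I_d)`, `κ_1 = 2d + rank(BC - CB)`; more precisely, the
composition `ψ_1(B,C) ∘ ψ_0(B,C)` equals the commutator `CB - BC` under the standard
identifications `Λ⁰(k²) ≅ k` and `Λ²(k²) ≅ k`. -/
theorem kappa_one_of_commutator {k : Type*} [Field k] (d : ℕ) (hd : 1 ≤ d)
    (B C : Matrix (Fin d) (Fin d) k) :
    kappa d 3 ![B, C, 1] 1 = 2 * d + (B * C - C * B).rank ∧
    psiMatrix d 2 ![B, C] 1 * psiMatrix d 2 ![B, C] 0 =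
      Matrix.of (fun qT pS => (C * B - B * C) qT.1 pS.1) := by
  exact ⟨kappa_part1 d B C, kappa_part2 d B C⟩
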